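/- Fourier-block description of the Drazin inverse: let A ∈ ℝ^{n×n×p} with bcirc(A) = (F_p* ⊗ I_n)·diag(A_1,…,A_p)·(F_p ⊗ I_n). Then the Drazin inverse A^D of A exists as a real tensor, and bcirc(A^D) = (F_p* ⊗ I_n)·diag(A_1^D,…,A_p^D)·(F_p ⊗ I_n), where A_k^D is the matrix Drazin inverse of the Fourier block A_k. -/

import Mathlib

open Matrix Complex BigOperators Kronecker

/-- A third-order tensor, represented by its frontal slices (indexed cyclically). -/
abbrev Tensor (F : Type*) (m n p : ℕ) : Type _ :=
  ZMod p → Matrix (Fin m) (Fin n) F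

/-- The block-circulant matrix of a tensor: block (i,j) is slice (i - j mod p). -/
def bcirc {F : Type*} {m n p : ℕ} (A : Tensor F m n p) :
    Matrix (ZMod p × Fin m) (ZMod p × Fin n) F :=
  Matrix.of fun ir jc => A (ir.1 - jc.1) ir.2 jc.2

/-- The t-product of tensors: (A*B)^{(i)} = ∑_j A^{(i-j)} B^{(j)}. -/
def tpr {F : Type*} [CommRing F] {m n l p : ℕ} [NeZero p]
    (A : Tensor F m n p) (B : Tensor F n l p) : Tensor F m l p :=
  fun i => ∑ j : ZMod p, A (i - j) * B j

/-- The identity tensor: first frontal slice is I_n, others are zero. -/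
def tId (F : Type*) [CommRing F] (n p : ℕ) [NeZero p] : Tensor F n n p :=
  fun i => if i = 0 then 1 else 0

/-- Tensor transpose: transpose each slice and reverse the order of slices 2..p. -/
def tT {F : Type*} {m n p : ℕ} (A : Tensor F m n p) : Tensor F n m p :=
  fun i => (A (-i))ᵀ

/-- ξ = e^{-2πi/p}. -/
noncomputable def xi (p : ℕ) : ℂ :=
  Complex.exp (-(2 * Real.pi * Complex.I) / p)

/-- The normalized DFT matrix of order p. -/
noncomputable def Fmat (p : ℕ) : Matrix (ZMod p) (ZMod p) ℂ :=
  Matrix.of fun j k => (1 / (Real.sqrt p : ℂ)) * xi p ^ (j.val * k.val)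

/-- The Fourier blocks of a complex tensor: A_i = ∑_k ξ^{(i)(k)} A^{(k)} (0-based). -/
noncomputable def fblock {m n p : ℕ} [NeZero p] (A : Tensor ℂ m n p) (i : ZMod p) :
    Matrix (Fin m) (Fin n) ℂ :=
  ∑ k : ZMod p, xi p ^ (i.val * k.val) • A k

/-- Complexification of a real tensor. -/
def cplx {m n p : ℕ} (A : Tensor ℝ m n p) : Tensor ℂ m n p :=
  fun i => (A i).map (Complex.ofReal)

/-- Block diagonal matrix with p equal-size blocks. -/
def blockDiag {m n p : ℕ} (M : ZMod p → Matrix (Fin m) (Fin n) ℂ) :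
    Matrix (ZMod p × Fin m) (ZMod p × Fin n) ℂ :=
  Matrix.of fun ir jc => if ir.1 = jc.1 then M ir.1 ir.2 jc.2 else 0

/-- Entrywise conjugation of a complex matrix. -/
def conjM {m n : ℕ} (M : Matrix (Fin m) (Fin n) ℂ) : Matrix (Fin m) (Fin n) ℂ :=
  M.map (starRingEnd ℂ)

/-- A complex matrix is real if all entries have zero imaginary part. -/
def IsRealM {m n : ℕ} (M : Matrix (Fin m) (Fin n) ℂ) : Prop :=
  ∀ r c, (M r c).im = 0

/-- Tensor power with respect to the t-product. -/
def tpow {F : Type*} [CommRing F] {n p : ℕ} [NeZero p] (A : Tensor F n n p) : ℕ → Tensor F n n p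
  | 0 => tId F n p
  | k + 1 => tpr A (tpow A k)

/-- The Drazin equations for complex matrices. -/
def IsDrazinM {n : ℕ} (M X : Matrix (Fin n) (Fin n) ℂ) : Prop :=
  (∃ k : ℕ, M ^ (k + 1) * X = M ^ k) ∧ X * M * X = X ∧ M * X = X * M

/-! ### Auxiliary: matrix Drazin inverses -/

section Drazin
open Polynomial

lemma aux_drazin_exists {n : ℕ} (M : Matrix (Fin n) (Fin n) ℂ) : ∃ X, IsDrazinM M X := by
  have hCH : (aeval M) M.charpoly = 0 := Matrix.aeval_self_charpoly M
  have hne : M.charpoly ≠ 0 := (Matrix.charpoly_monic M).ne_zero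
  obtain ⟨q, hq, hnd⟩ := M.charpoly.exists_eq_pow_rootMultiplicity_mul_and_not_dvd hne 0
  rw [map_zero, sub_zero] at hq hnd
  set r := M.charpoly.rootMultiplicity 0 with hr
  have h0 : aeval M (X ^ r * q) = 0 := by rw [← hq]; exact hCH
  have hcop : IsCoprime ((X : ℂ[X]) ^ r) q :=
    (Polynomial.irreducible_X.coprime_iff_not_dvd.mpr hnd).pow_left
  obtain ⟨u, v, huv⟩ := hcop
  obtain ⟨w, h, hwh⟩ := Polynomial.irreducible_X.coprime_iff_not_dvd.mpr hnd
  set g : ℂ[X] := w * u * X ^ r with hg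
  have I1 : X ^ (r + 1) * g = X ^ r - (v + h * u * X ^ r) * (X ^ r * q) := by
    rw [hg]; linear_combination (u * X^(2*r)) * hwh + (X^r : ℂ[X]) * huv
  have I2 : g * X * g = g - (w * u * v + w * u * u * h * X ^ r) * (X ^ r * q) := by
    rw [hg]; linear_combination (w*u^2*X^(2*r)) * hwh + (w*u*X^r : ℂ[X]) * huv
  clear_value g
  refine ⟨aeval M g, ⟨r, ?_⟩, ?_, ?_⟩
  · have e : M ^ (r + 1) * aeval M g = aeval M (X ^ (r+1) * g) := by
      rw [_root_.map_mul, map_pow, aeval_X]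
    rw [e, I1, map_sub, _root_.map_mul, h0, mul_zero, sub_zero, map_pow, aeval_X]
  · have e : aeval M g * M * aeval M g = aeval M (g * X * g) := by
      rw [_root_.map_mul, _root_.map_mul, aeval_X]
    rw [e, I2, map_sub, _root_.map_mul, h0, mul_zero, sub_zero]
  · calc M * aeval M g = aeval M (X * g) := by rw [_root_.map_mul, aeval_X]
      _ = aeval M (g * X) := by rw [mul_comm]
      _ = aeval M g * M := by rw [_root_.map_mul, aeval_X]

lemma aux_idem_pow {α : Type*} [Monoid α] {z : α} (h : z * z = z) : ∀ m : ℕ, z ^ (m + 1) = z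
  | 0 => pow_one z
  | m + 1 => by rw [pow_succ, aux_idem_pow h m, h]

lemma aux_drazin_unique {n : ℕ} {M X Y : Matrix (Fin n) (Fin n) ℂ}
    (hX : IsDrazinM M X) (hY : IsDrazinM M Y) : X = Y := by
  obtain ⟨⟨k, hk⟩, hX2, hX3⟩ := hX
  obtain ⟨⟨l, hl⟩, hY2, hY3⟩ := hY
  have cX : Commute M X := hX3
  have cY : Commute M Y := hY3
  have hXpow : ∀ m : ℕ, X = X ^ (m + 1) * M ^ m := by
    intro m; induction m with
    | zero => simp
    | succ m ih =>
      symm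
      calc X ^ (m+1+1) * M ^ (m+1) = X * (X ^ (m+1) * M ^ m) * M := by
            rw [pow_succ' X, pow_succ M]; simp only [mul_assoc]
        _ = X * X * M := by rw [← ih]
        _ = X * (M * X) := by rw [hX3]; simp only [mul_assoc]
        _ = X := by rw [← mul_assoc]; exact hX2
  have hYpow : ∀ m : ℕ, Y = M ^ m * Y ^ (m + 1) := by
    intro m; induction m with
    | zero => simp
    | succ m ih =>
      symm
      calc M ^ (m+1) * Y ^ (m+1+1) = M * (M ^ m * Y ^ (m+1)) * Y := by
            rw [pow_succ' M, pow_succ Y]; simp only [mul_assoc]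
        _ = M * Y * Y := by rw [← ih]
        _ = Y * M * Y := by rw [hY3]
        _ = Y := hY2
  have hMX : (X * M) * (X * M) = X * M := by
    calc (X * M) * (X * M) = (X * M * X) * M := by simp only [mul_assoc]
      _ = X * M := by rw [hX2]
  have hMY : (M * Y) * (M * Y) = M * Y := by
    calc (M * Y) * (M * Y) = M * ((Y * M) * Y) := by simp only [mul_assoc]
      _ = M * Y := by rw [hY2]
  have e1 : X = X * (M * Y) := by
    calc X = X ^ (l+1) * M ^ l := hXpow l
      _ = X ^ (l+1) * (M ^ (l+1) * Y) := by rw [hl]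
      _ = (X * M) ^ (l+1) * Y := by rw [cX.symm.mul_pow]; simp only [mul_assoc]
      _ = (X * M) * Y := by rw [aux_idem_pow hMX]
      _ = X * (M * Y) := by rw [mul_assoc]
  have e2 : Y = X * (M * Y) := by
    calc Y = M ^ k * Y ^ (k+1) := hYpow k
      _ = (X * M ^ (k+1)) * Y ^ (k+1) := by rw [(cX.symm.pow_right (k+1)).eq, hk]
      _ = X * (M * Y) ^ (k+1) := by rw [cY.mul_pow]; simp only [mul_assoc]
      _ = X * (M * Y) := by rw [aux_idem_pow hMY]
  rw [e1, ← e2]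

lemma aux_drazin_pow_mono {n : ℕ} {M X : Matrix (Fin n) (Fin n) ℂ} {k : ℕ}
    (h : M ^ (k + 1) * X = M ^ k) {m : ℕ} (hm : k ≤ m) : M ^ (m + 1) * X = M ^ m := by
  obtain ⟨t, rfl⟩ := Nat.exists_eq_add_of_le hm
  have : M ^ (k + t + 1) = M ^ t * M ^ (k + 1) := by rw [← pow_add]; ring_nf
  rw [this, mul_assoc, h, ← pow_add]; ring_nf

lemma aux_conjM_mul {n : ℕ} (M N : Matrix (Fin n) (Fin n) ℂ) :
    conjM (M * N) = conjM M * conjM N := Matrix.map_mul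

lemma aux_conjM_pow {n : ℕ} (M : Matrix (Fin n) (Fin n) ℂ) (k : ℕ) :
    conjM (M ^ k) = conjM M ^ k := by
  induction k with
  | zero =>
    simp only [pow_zero, conjM]
    exact Matrix.map_one _ (map_zero _) (map_one _)
  | succ k ih => rw [pow_succ, aux_conjM_mul, ih, pow_succ]

lemma aux_drazin_conj {n : ℕ} {M X : Matrix (Fin n) (Fin n) ℂ} (h : IsDrazinM M X) :
    IsDrazinM (conjM M) (conjM X) := by
  obtain ⟨⟨k, hk⟩, h2, h3⟩ := h
  exact ⟨⟨k, by rw [← aux_conjM_pow, ← aux_conjM_mul, hk, aux_conjM_pow]⟩,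
    by rw [← aux_conjM_mul, ← aux_conjM_mul, h2],
    by rw [← aux_conjM_mul, ← aux_conjM_mul, h3]⟩

end Drazin

/-! ### Auxiliary: roots of unity -/

noncomputable def ee (p : ℕ) (m : ZMod p) : ℂ := xi p ^ m.val

section Roots
variable {p : ℕ} [NeZero p]

lemma xi_ne_zero : xi p ≠ 0 := Complex.exp_ne_zero _

omit [NeZero p] in
lemma xi_pow_p : xi p ^ p = 1 := by
  by_cases hp0 : p = 0
  · subst hp0; simp
  have hp : (p : ℂ) ≠ 0 := Nat.cast_ne_zero.mpr hp0
  rw [xi, ← Complex.exp_nat_mul]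
  have : (p : ℂ) * (-(2 * Real.pi * Complex.I) / p) = (-1 : ℤ) * (2 * Real.pi * Complex.I) := by
    field_simp
    ring
  rw [this, Complex.exp_int_mul_two_pi_mul_I]

omit [NeZero p] in
lemma aux_pow_mod (z : ℂ) (hz : z ^ p = 1) (m : ℕ) : z ^ (m % p) = z ^ m := by
  conv_rhs => rw [← Nat.mod_add_div m p]
  rw [pow_add, pow_mul, hz, one_pow, mul_one]

lemma ee_zero : ee p 0 = 1 := by rw [ee, ZMod.val_zero, pow_zero]

lemma ee_add (a b : ZMod p) : ee p (a + b) = ee p a * ee p b := by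
  rw [ee, ee, ee, ZMod.val_add, aux_pow_mod _ xi_pow_p, pow_add]

lemma xi_pow_val_mul (i k : ZMod p) : xi p ^ (i.val * k.val) = ee p (i * k) := by
  rw [ee, ZMod.val_mul, aux_pow_mod _ xi_pow_p]

lemma ee_ne_zero (m : ZMod p) : ee p m ≠ 0 := pow_ne_zero _ xi_ne_zero

lemma ee_mul_neg (m : ZMod p) : ee p m * ee p (-m) = 1 := by
  rw [← ee_add, add_neg_cancel, ee_zero]

omit [NeZero p] in
lemma xi_eq : xi p = Complex.exp (((-(2*Real.pi)/p : ℝ) : ℂ) * Complex.I) := by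
  rw [xi]; congr 1; push_cast; ring

omit [NeZero p] in
lemma xi_mul_conj : xi p * (starRingEnd ℂ) (xi p) = 1 := by
  rw [xi_eq, ← Complex.exp_conj]
  rw [show (starRingEnd ℂ) (((-(2*Real.pi)/p : ℝ) : ℂ) * Complex.I)
      = -((((-(2*Real.pi)/p : ℝ) : ℂ)) * Complex.I) by
    rw [_root_.map_mul, Complex.conj_ofReal, Complex.conj_I]; ring]
  rw [← Complex.exp_add, add_neg_cancel, Complex.exp_zero]

lemma ee_conj (m : ZMod p) : (starRingEnd ℂ) (ee p m) = ee p (-m) := by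
  have h1 : ee p m * (starRingEnd ℂ) (ee p m) = 1 := by
    rw [ee, map_pow, ← mul_pow, xi_mul_conj, one_pow]
  exact mul_left_cancel₀ (ee_ne_zero m) (h1.trans (ee_mul_neg m).symm)

lemma xi_pow_ne_one {m : ℕ} (h0 : 0 < m) (hm : m < p) : xi p ^ m ≠ 1 := by
  intro hcon
  rw [xi, ← Complex.exp_nat_mul, Complex.exp_eq_one_iff] at hcon
  obtain ⟨k, hk⟩ := hcon
  have hp : (p : ℂ) ≠ 0 := Nat.cast_ne_zero.mpr (NeZero.ne p)
  have hpi : (2 * (Real.pi : ℂ) * Complex.I) ≠ 0 := by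
    simp [Real.pi_ne_zero, Complex.I_ne_zero]
  field_simp at hk
  have h3 : (-(m:ℂ)) * (2 * (Real.pi:ℂ) * Complex.I)
      = ((k:ℂ) * p) * (2 * (Real.pi:ℂ) * Complex.I) := by
    linear_combination (2 * (Real.pi:ℂ) * Complex.I) * hk
  have h4 := mul_right_cancel₀ hpi h3
  have hmk : ((m : ℤ) : ℂ) = ((-k * p : ℤ) : ℂ) := by push_cast; linear_combination -h4
  have hmz : (m : ℤ) = -k * p := Int.cast_injective hmk
  have hdvd : (p : ℤ) ∣ (m : ℤ) := ⟨-k, by linarith [hmz]⟩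
  have := Nat.le_of_dvd h0 (Int.natCast_dvd_natCast.mp hdvd)
  omega

lemma ee_sum (d : ZMod p) : ∑ i : ZMod p, ee p (i * d) = if d = 0 then (p : ℂ) else 0 := by
  by_cases hd : d = 0
  · simp [hd, ee_zero, Finset.card_univ, ZMod.card]
  · simp only [hd, if_false]
    have hvp : 0 < d.val := Nat.pos_of_ne_zero fun h => hd (by
      have := ZMod.natCast_zmod_val d; rw [h] at this; simpa using this.symm)
    set z : ℂ := xi p ^ d.val with hz
    have hz1 : z ≠ 1 := xi_pow_ne_one hvp (ZMod.val_lt d)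
    have key : ∀ i : ZMod p, ee p (i * d) = z ^ i.val := by
      intro i; rw [← xi_pow_val_mul, hz, ← pow_mul, mul_comm]
    rw [Finset.sum_congr rfl fun i _ => key i]
    have hre : ∑ i : ZMod p, z ^ i.val = ∑ j ∈ Finset.range p, z ^ j := by
      refine Finset.sum_nbij' (fun i => i.val) (fun j => (j : ZMod p)) ?_ ?_ ?_ ?_ ?_
      · intro i _; exact Finset.mem_range.mpr (ZMod.val_lt i)
      · intro j _; exact Finset.mem_univ _
      · intro i _; exact ZMod.natCast_zmod_val i
      · intro j hj; exact ZMod.val_cast_of_lt (Finset.mem_range.mp hj)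
      · intro i _; rfl
    rw [hre, geom_sum_eq hz1, hz, ← pow_mul, mul_comm d.val p, pow_mul, xi_pow_p, one_pow,
      sub_self, zero_div]

end Roots

/-! ### Auxiliary: Fourier block lemmas -/

section Fourier
variable {m n l p : ℕ} [NeZero p]

lemma fblock_eq (A : Tensor ℂ m n p) (i : ZMod p) :
    fblock A i = ∑ k : ZMod p, ee p (i * k) • A k := by
  unfold fblock
  exact Finset.sum_congr rfl fun k _ => by rw [xi_pow_val_mul]

lemma fblock_tpr (A : Tensor ℂ m n p) (B : Tensor ℂ n l p) (i : ZMod p) :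
    fblock (tpr A B) i = fblock A i * fblock B i := by
  rw [fblock_eq, fblock_eq, fblock_eq]
  simp_rw [Matrix.sum_mul, Matrix.mul_sum]
  unfold tpr
  calc ∑ k : ZMod p, ee p (i*k) • ∑ j : ZMod p, A (k-j) * B j
      = ∑ k : ZMod p, ∑ j : ZMod p, ee p (i*k) • (A (k-j) * B j) := by
        simp_rw [Finset.smul_sum]
    _ = ∑ j : ZMod p, ∑ k : ZMod p, ee p (i*k) • (A (k-j) * B j) := Finset.sum_comm
    _ = ∑ j : ZMod p, ∑ d : ZMod p, ee p (i*(j+d)) • (A (j+d-j) * B j) := by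
        refine Finset.sum_congr rfl fun j _ => ?_
        exact (Equiv.sum_comp (Equiv.addLeft j) fun k => ee p (i*k) • (A (k-j) * B j)).symm
    _ = ∑ j : ZMod p, ∑ d : ZMod p, (ee p (i*d) • A d) * (ee p (i*j) • B j) := by
        refine Finset.sum_congr rfl fun j _ => Finset.sum_congr rfl fun d _ => ?_
        rw [add_sub_cancel_left, show i*(j+d) = i*d + i*j from by ring, ee_add,
          Matrix.smul_mul, Matrix.mul_smul, smul_smul]
    _ = ∑ d : ZMod p, ∑ j : ZMod p, (ee p (i*d) • A d) * (ee p (i*j) • B j) := Finset.sum_comm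

lemma fblock_tId (i : ZMod p) : fblock (tId ℂ n p) i = 1 := by
  rw [fblock_eq]
  unfold tId
  rw [Finset.sum_congr rfl (fun k _ => by
    rw [smul_ite, smul_zero] :
      ∀ k ∈ Finset.univ, ee p (i*k) • (if k = 0 then (1 : Matrix (Fin n) (Fin n) ℂ) else 0)
        = if k = 0 then ee p (i*k) • 1 else 0)]
  rw [Finset.sum_ite_eq' Finset.univ (0 : ZMod p) (fun k => ee p (i*k) • 1)]
  simp [ee_zero]

lemma fblock_tpow (A : Tensor ℂ n n p) (k : ℕ) (i : ZMod p) :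
    fblock (tpow A k) i = (fblock A i) ^ k := by
  induction k with
  | zero => rw [tpow, pow_zero, fblock_tId]
  | succ k ih => rw [tpow, fblock_tpr, ih, pow_succ']

lemma invF_fblock (X : Tensor ℂ m n p) (k : ZMod p) :
    (p : ℂ)⁻¹ • ∑ i : ZMod p, ee p (-(i*k)) • fblock X i = X k := by
  have hp : (p : ℂ) ≠ 0 := Nat.cast_ne_zero.mpr (NeZero.ne p)
  calc (p : ℂ)⁻¹ • ∑ i : ZMod p, ee p (-(i*k)) • fblock X i
      = (p : ℂ)⁻¹ • ∑ i : ZMod p, ∑ j : ZMod p, (ee p (-(i*k)) * ee p (i*j)) • X j := by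
        refine congrArg _ (Finset.sum_congr rfl fun i _ => ?_)
        rw [fblock_eq, Finset.smul_sum]
        exact Finset.sum_congr rfl fun j _ => by rw [smul_smul]
    _ = (p : ℂ)⁻¹ • ∑ j : ZMod p, (∑ i : ZMod p, ee p (i * (j - k))) • X j := by
        rw [Finset.sum_comm]
        refine congrArg _ (Finset.sum_congr rfl fun j _ => ?_)
        rw [Finset.sum_smul]
        refine Finset.sum_congr rfl fun i _ => ?_
        rw [← ee_add, show -(i*k) + i*j = i * (j - k) from by ring]
    _ = (p : ℂ)⁻¹ • ∑ j : ZMod p, (if j = k then ((p : ℂ)) • X j else 0) := by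
        refine congrArg _ (Finset.sum_congr rfl fun j _ => ?_)
        rw [ee_sum]
        by_cases h : j = k
        · rw [if_pos (sub_eq_zero.mpr h), if_pos h]
        · rw [if_neg (fun hc => h (sub_eq_zero.mp hc)), if_neg h, zero_smul]
    _ = X k := by
        rw [Finset.sum_ite_eq' Finset.univ (k : ZMod p) (fun j => (p : ℂ) • X j),
          if_pos (Finset.mem_univ _), smul_smul, inv_mul_cancel₀ hp, one_smul]

lemma fblock_invF (E : ZMod p → Matrix (Fin m) (Fin n) ℂ) (j : ZMod p) :
    fblock (fun k => (p : ℂ)⁻¹ • ∑ i : ZMod p, ee p (-(i*k)) • E i) j = E j := by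
  have hp : (p : ℂ) ≠ 0 := Nat.cast_ne_zero.mpr (NeZero.ne p)
  rw [fblock_eq]
  calc ∑ k : ZMod p, ee p (j*k) • ((p : ℂ)⁻¹ • ∑ i : ZMod p, ee p (-(i*k)) • E i)
      = ∑ k : ZMod p, ∑ i : ZMod p, ((p : ℂ)⁻¹ * (ee p (j*k) * ee p (-(i*k)))) • E i := by
        refine Finset.sum_congr rfl fun k _ => ?_
        rw [smul_smul, Finset.smul_sum]
        refine Finset.sum_congr rfl fun i _ => ?_
        rw [smul_smul]
        congr 1
        ring
    _ = ∑ i : ZMod p, ((p : ℂ)⁻¹ * ∑ k : ZMod p, ee p (k * (j - i))) • E i := by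
        rw [Finset.sum_comm]
        refine Finset.sum_congr rfl fun i _ => ?_
        rw [Finset.mul_sum, Finset.sum_smul]
        refine Finset.sum_congr rfl fun k _ => ?_
        congr 2
        rw [← ee_add, show j*k + -(i*k) = k * (j - i) from by ring]
    _ = ∑ i : ZMod p, (if i = j then E i else 0) := by
        refine Finset.sum_congr rfl fun i _ => ?_
        rw [ee_sum]
        by_cases h : i = j
        · rw [if_pos (sub_eq_zero.mpr h.symm), if_pos h, inv_mul_cancel₀ hp, one_smul]
        · rw [if_neg (fun hc => h (sub_eq_zero.mp hc).symm), if_neg h, mul_zero, zero_smul]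
    _ = E j := by
        rw [Finset.sum_ite_eq' Finset.univ (j : ZMod p) E, if_pos (Finset.mem_univ _)]

lemma fblock_inj {X Y : Tensor ℂ m n p} (h : ∀ i, fblock X i = fblock Y i) : X = Y := by
  funext k
  calc X k = (p : ℂ)⁻¹ • ∑ i : ZMod p, ee p (-(i*k)) • fblock X i := (invF_fblock X k).symm
    _ = (p : ℂ)⁻¹ • ∑ i : ZMod p, ee p (-(i*k)) • fblock Y i := by simp_rw [h]
    _ = Y k := invF_fblock Y k

end Fourier

/-! ### Auxiliary: complexification -/

section Cplx
variable {m n l p : ℕ} [NeZero p]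

lemma cplx_tpr (A : Tensor ℝ m n p) (B : Tensor ℝ n l p) :
    cplx (tpr A B) = tpr (cplx A) (cplx B) := by
  funext i
  ext r c
  simp only [cplx, tpr, Matrix.map_apply, Matrix.sum_apply, Matrix.mul_apply]
  push_cast
  rfl

lemma cplx_tId : cplx (tId ℝ n p) = tId ℂ n p := by
  funext i
  unfold cplx tId
  by_cases h : i = 0
  · simp only [h, if_true]
    exact Matrix.map_one _ Complex.ofReal_zero Complex.ofReal_one
  · simp only [h, if_false]
    exact Matrix.map_zero _ Complex.ofReal_zero

lemma cplx_tpow (A : Tensor ℝ n n p) (k : ℕ) : cplx (tpow A k) = tpow (cplx A) k := by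
  induction k with
  | zero => exact cplx_tId
  | succ k ih => rw [tpow, cplx_tpr, ih, tpow]

lemma cplx_inj {A B : Tensor ℝ m n p} (h : cplx A = cplx B) : A = B := by
  funext i
  ext r c
  have h2 : ((A i r c : ℝ) : ℂ) = ((B i r c : ℝ) : ℂ) :=
    congrFun (congrFun (congrFun h i) r) c
  exact_mod_cast h2

lemma fblock_cplx_entry (A : Tensor ℝ m n p) (i : ZMod p) (r : Fin m) (c : Fin n) :
    fblock (cplx A) i r c = ∑ k : ZMod p, ee p (i*k) * ((A k r c : ℝ) : ℂ) := by
  rw [fblock_eq]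
  rw [Matrix.sum_apply]
  refine Finset.sum_congr rfl fun k _ => ?_
  rw [Matrix.smul_apply, smul_eq_mul]
  rfl

lemma fblock_cplx_neg (A : Tensor ℝ m n p) (i : ZMod p) :
    fblock (cplx A) (-i) = conjM (fblock (cplx A) i) := by
  ext r c
  rw [fblock_cplx_entry, conjM, Matrix.map_apply, fblock_cplx_entry, map_sum]
  refine Finset.sum_congr rfl fun k _ => ?_
  rw [_root_.map_mul, ee_conj, Complex.conj_ofReal, neg_mul]

end Cplx

/-! ### Auxiliary: the bcirc diagonalization -/

section Bcirc
variable {n p : ℕ} [NeZero p]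

lemma sqrtp_mul_self : ((Real.sqrt p : ℝ) : ℂ) * ((Real.sqrt p : ℝ) : ℂ) = (p : ℂ) := by
  rw [← Complex.ofReal_mul, Real.mul_self_sqrt (Nat.cast_nonneg p)]
  norm_cast

lemma Fmat_apply (j k : ZMod p) : Fmat p j k = (1 / (Real.sqrt p : ℂ)) * ee p (j * k) := by
  rw [Fmat]
  simp only [Matrix.of_apply]
  rw [xi_pow_val_mul]

lemma FmatH_mul_Fmat : (Fmat p)ᴴ * Fmat p = (1 : Matrix (ZMod p) (ZMod p) ℂ) := by
  have hp : (p : ℂ) ≠ 0 := Nat.cast_ne_zero.mpr (NeZero.ne p)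
  ext j k
  rw [Matrix.mul_apply, Matrix.one_apply]
  have step : ∀ a : ZMod p, (Fmat p)ᴴ j a * Fmat p a k = (p:ℂ)⁻¹ * ee p (a * (k - j)) := by
    intro a
    rw [Matrix.conjTranspose_apply, Fmat_apply, Fmat_apply]
    rw [show star ((1 / (Real.sqrt p : ℂ)) * ee p (a*j))
        = (1 / (Real.sqrt p : ℂ)) * ee p (-(a*j)) from by
      rw [Complex.star_def, _root_.map_mul, map_div₀, _root_.map_one, Complex.conj_ofReal, ee_conj]]
    have h1 : ee p (-(a*j)) * ee p (a*k) = ee p (a * (k - j)) := by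
      rw [← ee_add, show -(a*j) + a*k = a * (k - j) from by ring]
    have h2 : ((1:ℂ) / (Real.sqrt p : ℂ)) * (1 / (Real.sqrt p : ℂ)) = (p:ℂ)⁻¹ := by
      rw [div_mul_div_comm, one_mul, sqrtp_mul_self, one_div]
    calc (1 / (Real.sqrt p : ℂ)) * ee p (-(a*j)) * ((1 / (Real.sqrt p : ℂ)) * ee p (a*k))
        = ((1:ℂ) / (Real.sqrt p : ℂ)) * (1 / (Real.sqrt p : ℂ))
            * (ee p (-(a*j)) * ee p (a*k)) := by ring
      _ = (p:ℂ)⁻¹ * ee p (a * (k - j)) := by rw [h1, h2]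
  rw [Finset.sum_congr rfl fun a _ => step a, ← Finset.mul_sum, ee_sum]
  by_cases h : j = k
  · rw [if_pos (by rw [h, sub_self]), if_pos h, inv_mul_cancel₀ hp]
  · rw [if_neg (fun hc => h (sub_eq_zero.mp hc).symm), if_neg h, mul_zero]

lemma kron_mul_bcirc (X : Tensor ℂ n n p) :
    (Fmat p ⊗ₖ (1 : Matrix (Fin n) (Fin n) ℂ)) * bcirc X
      = blockDiag (fun i => fblock X i) * (Fmat p ⊗ₖ (1 : Matrix (Fin n) (Fin n) ℂ)) := by
  ext jr bc
  obtain ⟨j, r⟩ := jr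
  obtain ⟨b, c⟩ := bc
  rw [Matrix.mul_apply, Matrix.mul_apply, Fintype.sum_prod_type, Fintype.sum_prod_type]
  have hL : ∀ a : ZMod p,
      (∑ s : Fin n, (Fmat p ⊗ₖ (1 : Matrix (Fin n) (Fin n) ℂ)) (j,r) (a,s)
        * bcirc X (a,s) (b,c)) = Fmat p j a * X (a - b) r c := by
    intro a
    have : ∀ s : Fin n, (Fmat p ⊗ₖ (1 : Matrix (Fin n) (Fin n) ℂ)) (j,r) (a,s)
        * bcirc X (a,s) (b,c)
        = Fmat p j a * ((1 : Matrix (Fin n) (Fin n) ℂ) r s * X (a - b) s c) := by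
      intro s
      rw [Matrix.kroneckerMap_apply, bcirc]
      simp only [Matrix.of_apply]
      ring
    rw [Finset.sum_congr rfl fun s _ => this s, ← Finset.mul_sum, ← Matrix.mul_apply,
      Matrix.one_mul]
  have hR : ∀ k : ZMod p,
      (∑ s : Fin n, blockDiag (fun i => fblock X i) (j,r) (k,s)
        * (Fmat p ⊗ₖ (1 : Matrix (Fin n) (Fin n) ℂ)) (k,s) (b,c))
      = if j = k then Fmat p j b * fblock X j r c else 0 := by
    intro k
    by_cases h : j = k
    · subst h
      simp only [if_true]
      have : ∀ s : Fin n, blockDiag (fun i => fblock X i) (j,r) (j,s)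
          * (Fmat p ⊗ₖ (1 : Matrix (Fin n) (Fin n) ℂ)) (j,s) (b,c)
          = Fmat p j b * (fblock X j r s * (1 : Matrix (Fin n) (Fin n) ℂ) s c) := by
        intro s
        rw [Matrix.kroneckerMap_apply, _root_.blockDiag]
        simp only [Matrix.of_apply, eq_self_iff_true, if_true]
        ring
      rw [Finset.sum_congr rfl fun s _ => this s, ← Finset.mul_sum, ← Matrix.mul_apply,
        Matrix.mul_one]
    · have : ∀ s : Fin n, blockDiag (fun i => fblock X i) (j,r) (k,s)
          * (Fmat p ⊗ₖ (1 : Matrix (Fin n) (Fin n) ℂ)) (k,s) (b,c) = 0 := by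
        intro s
        rw [_root_.blockDiag]
        simp only [Matrix.of_apply, if_neg h, zero_mul]
      rw [Finset.sum_congr rfl fun s _ => this s, Finset.sum_const, smul_zero, if_neg h]
  rw [Finset.sum_congr rfl fun a _ => hL a, Finset.sum_congr rfl fun k _ => hR k,
    Finset.sum_ite_eq Finset.univ j (fun _ => Fmat p j b * fblock X j r c),
    if_pos (Finset.mem_univ _)]
  -- remaining : ∑ a, Fmat p j a * X (a - b) r c = Fmat p j b * fblock X j r c
  calc ∑ a : ZMod p, Fmat p j a * X (a - b) r c
      = ∑ d : ZMod p, Fmat p j (b + d) * X (b + d - b) r c :=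
        (Equiv.sum_comp (Equiv.addLeft b) fun a => Fmat p j a * X (a - b) r c).symm
    _ = ∑ d : ZMod p, Fmat p j b * (ee p (j*d) * X d r c) := by
        refine Finset.sum_congr rfl fun d _ => ?_
        rw [add_sub_cancel_left, Fmat_apply, Fmat_apply,
          show j * (b + d) = j*b + j*d from by ring, ee_add]
        ring
    _ = Fmat p j b * fblock X j r c := by
        rw [← Finset.mul_sum]
        congr 1
        rw [fblock_eq, Matrix.sum_apply]
        refine Finset.sum_congr rfl fun d _ => ?_
        rw [Matrix.smul_apply, smul_eq_mul]

lemma bcirc_eq (X : Tensor ℂ n n p) :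
    bcirc X = ((Fmat p)ᴴ ⊗ₖ (1 : Matrix (Fin n) (Fin n) ℂ))
      * blockDiag (fun i => fblock X i) * (Fmat p ⊗ₖ (1 : Matrix (Fin n) (Fin n) ℂ)) := by
  have hunit : ((Fmat p)ᴴ ⊗ₖ (1 : Matrix (Fin n) (Fin n) ℂ))
      * (Fmat p ⊗ₖ (1 : Matrix (Fin n) (Fin n) ℂ)) = 1 := by
    rw [← Matrix.mul_kronecker_mul, FmatH_mul_Fmat, Matrix.one_mul, Matrix.one_kronecker_one]
  calc bcirc X = 1 * bcirc X := (Matrix.one_mul _).symm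
    _ = ((Fmat p)ᴴ ⊗ₖ (1 : Matrix (Fin n) (Fin n) ℂ))
        * ((Fmat p ⊗ₖ (1 : Matrix (Fin n) (Fin n) ℂ)) * bcirc X) := by
        rw [← Matrix.mul_assoc, hunit]
    _ = ((Fmat p)ᴴ ⊗ₖ (1 : Matrix (Fin n) (Fin n) ℂ))
        * (blockDiag (fun i => fblock X i) * (Fmat p ⊗ₖ (1 : Matrix (Fin n) (Fin n) ℂ))) := by
        rw [kron_mul_bcirc]
    _ = _ := by rw [Matrix.mul_assoc]

end Bcirc

theorem stmt15 {n p : ℕ} [NeZero p] (A : Tensor ℝ n n p) :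
    ∃ D : Tensor ℝ n n p,
      ((∃ k : ℕ, tpr (tpow A (k + 1)) D = tpow A k) ∧
        tpr D (tpr A D) = D ∧ tpr A D = tpr D A) ∧
      ∀ Dk : ZMod p → Matrix (Fin n) (Fin n) ℂ,
        (∀ i, IsDrazinM (fblock (cplx A) i) (Dk i)) →
        bcirc (cplx D) =
          ((Fmat p)ᴴ ⊗ₖ (1 : Matrix (Fin n) (Fin n) ℂ)) * blockDiag Dk *
            ((Fmat p) ⊗ₖ (1 : Matrix (Fin n) (Fin n) ℂ)) := by
  set B : ZMod p → Matrix (Fin n) (Fin n) ℂ := fun i => fblock (cplx A) i with hB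
  choose E hE using fun i => aux_drazin_exists (B i)
  have hBneg : ∀ i, B (-i) = conjM (B i) := fun i => fblock_cplx_neg A i
  have hEneg : ∀ i, E (-i) = conjM (E i) := by
    intro i
    refine aux_drazin_unique (hE (-i)) ?_
    rw [hBneg]
    exact aux_drazin_conj (hE i)
  set Dc : Tensor ℂ n n p := fun k => (p : ℂ)⁻¹ • ∑ i : ZMod p, ee p (-(i*k)) • E i with hDc
  have hfD : ∀ j, fblock Dc j = E j := fun j => fblock_invF E j
  have hreal : ∀ k r c, ((Dc k) r c).im = 0 := by
    intro k r c
    have hentry : Dc k r c = (p:ℂ)⁻¹ * ∑ i : ZMod p, ee p (-(i*k)) * E i r c := by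
      rw [hDc]
      simp only [Matrix.smul_apply, Matrix.sum_apply, smul_eq_mul]
    have hc : (starRingEnd ℂ) (Dc k r c) = Dc k r c := by
      rw [hentry, _root_.map_mul, map_inv₀, map_natCast, map_sum]
      congr 1
      calc ∑ i : ZMod p, (starRingEnd ℂ) (ee p (-(i*k)) * E i r c)
          = ∑ i : ZMod p, ee p (-((-i)*k)) * E (-i) r c := by
            refine Finset.sum_congr rfl fun i _ => ?_
            rw [_root_.map_mul, ee_conj, neg_neg,
              show (starRingEnd ℂ) (E i r c) = conjM (E i) r c from rfl, ← hEneg,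
              show -(-i*k) = i * k from by ring]
        _ = ∑ i : ZMod p, ee p (-(i*k)) * E i r c :=
            Equiv.sum_comp (Equiv.neg (ZMod p)) fun i => ee p (-(i*k)) * E i r c
    exact Complex.conj_eq_iff_im.mp hc
  set D : Tensor ℝ n n p := fun k => (Dc k).map Complex.re with hD
  have hcd : cplx D = Dc := by
    funext k
    ext r c
    apply Complex.ext
    · rfl
    · show ((((Dc k r c).re : ℝ) : ℂ)).im = (Dc k r c).im
      rw [hreal]
      simp
  have hfDc : ∀ i, fblock (cplx D) i = E i := by
    intro i
    rw [hcd]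
    exact hfD i
  choose K hK using fun i => (hE i).1
  set k0 := Finset.univ.sup K with hk0def
  have hk0 : ∀ i, B i ^ (k0 + 1) * E i = B i ^ k0 :=
    fun i => aux_drazin_pow_mono (hK i) (Finset.le_sup (Finset.mem_univ i))
  have hfA : ∀ (m : ℕ) (i : ZMod p), fblock (cplx (tpow A m)) i = B i ^ m := by
    intro m i
    rw [cplx_tpow, fblock_tpow]
  refine ⟨D, ⟨⟨k0, ?_⟩, ?_, ?_⟩, ?_⟩
  · apply cplx_inj
    rw [cplx_tpr]
    apply fblock_inj
    intro i
    rw [fblock_tpr, hfA, hfA, hfDc]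
    exact hk0 i
  · apply cplx_inj
    rw [cplx_tpr, cplx_tpr]
    apply fblock_inj
    intro i
    rw [fblock_tpr, fblock_tpr, hfDc]
    show E i * (B i * E i) = E i
    rw [← mul_assoc]
    exact (hE i).2.1
  · apply cplx_inj
    rw [cplx_tpr, cplx_tpr]
    apply fblock_inj
    intro i
    rw [fblock_tpr, fblock_tpr, hfDc]
    exact (hE i).2.2
  · intro Dk hDk
    have hDkE : Dk = fun i => fblock (cplx D) i :=
      funext fun i => (aux_drazin_unique (hDk i) (hE i)).trans (hfDc i).symm
    rw [hDkE]
    exact bcirc_eq (cplx D)
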